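/- Let T be a free group with basis {t_e : e ∈ E} indexed by the edge set of a connected graph Γ = (V, E). Define a graph Γ' with vertex set V × T and, for each (e, t) ∈ E × T, an edge joining (e(1), t_e·t) to (e(−1), t), where e(1), e(−1) are the endpoints of e. Then Γ' contains no cycle: every simple closed chain in Γ' has length zero. More precisely, if a simple chain of non-zero length joins (u, r) to (w, s), then there is τ ∈ T with τ ≠ 1 and τ·r = s; in particular (u, r) ≠ (w, s). -/

import Mathlib

open FreeGroup

variable {V E : Type u}

def GStep (v1 v2 : E → V) (p : E × Bool) (x y : V × FreeGroup E) : Prop :=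
  if p.2 then x.1 = v2 p.1 ∧ y.1 = v1 p.1 ∧ y.2 = FreeGroup.of p.1 * x.2
  else x.1 = v1 p.1 ∧ y.1 = v2 p.1 ∧ x.2 = FreeGroup.of p.1 * y.2

lemma gstep_cancel {v1 v2 : E → V} {e : E} {b : Bool} {x y z : V × FreeGroup E}
    (h1 : GStep v1 v2 (e, b) x y) (h2 : GStep v1 v2 (e, !b) y z) : x = z := by
  cases b <;> simp [GStep] at h1 h2
  · exact Prod.ext (h1.1.trans h2.2.1.symm) (h1.2.2.trans h2.2.2.symm)
  · exact Prod.ext (h1.1.trans h2.2.1.symm) (mul_left_cancel (h1.2.2.symm.trans h2.2.2))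

lemma gstep_mul {v1 v2 : E → V} {p : E × Bool} {x y : V × FreeGroup E}
    (h : GStep v1 v2 p x y) : FreeGroup.mk [p] * x.2 = y.2 := by
  obtain ⟨e, b⟩ := p
  cases b <;> simp [GStep] at h
  · rw [h.2.2]
    have : FreeGroup.mk [(e, false)] = (FreeGroup.of e)⁻¹ := by
      rw [FreeGroup.of, FreeGroup.inv_mk]; rfl
    rw [this]; group
  · rw [h.2.2]; rfl

lemma reduce_eq_self_of_chain' [DecidableEq E] {L : List (E × Bool)}
    (h : List.Chain' (fun x y : E × Bool => ¬(x.1 = y.1 ∧ x.2 = !y.2)) L) :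
    FreeGroup.reduce L = L := by
  induction L with
  | nil => rfl
  | cons x L ih =>
    have hL := ih h.tail
    rw [FreeGroup.reduce.cons, hL]
    cases L with
    | nil => rfl
    | cons y t =>
      have hxy : ¬(x.1 = y.1 ∧ x.2 = !y.2) := List.isChain_cons_cons.mp h |>.1
      simp [hxy]

lemma mk_ne_one [DecidableEq E] {L : List (E × Bool)} (hne : L ≠ [])
    (h : List.Chain' (fun x y : E × Bool => ¬(x.1 = y.1 ∧ x.2 = !y.2)) L) :
    FreeGroup.mk L ≠ 1 := by
  intro h1
  have := FreeGroup.toWord_mk (L₁ := L)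
  rw [h1, FreeGroup.toWord_one, reduce_eq_self_of_chain' h] at this
  exact hne this.symm

theorem stmt_9 (V E : Type u) (v1 v2 : E → V)
    (G' : SimpleGraph (V × FreeGroup E))
    (hG' : G' = SimpleGraph.fromRel (fun a b =>
      ∃ (e : E) (t : FreeGroup E), a = (v1 e, FreeGroup.of e * t) ∧ b = (v2 e, t))) :
    (∀ (u w : V) (r s : FreeGroup E) (c : G'.Walk (u, r) (w, s)),
        c.IsTrail → 0 < c.length → ∃ τ : FreeGroup E, τ ≠ 1 ∧ τ * r = s) ∧
      G'.IsAcyclic := by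
  classical
  have hadj : ∀ {x y : V × FreeGroup E}, G'.Adj x y → ∃ p, GStep v1 v2 p x y := by
    intro x y h
    rw [hG', SimpleGraph.fromRel_adj] at h
    rcases h.2 with ⟨e, t, hx, hy⟩ | ⟨e, t, hy, hx⟩
    · exact ⟨(e, false), by simp [GStep, hx, hy]⟩
    · exact ⟨(e, true), by simp [GStep, hx, hy]⟩
  -- main induction
  have main : ∀ {x y : V × FreeGroup E} (c : G'.Walk x y), c.IsTrail →
      ∃ M : List (E × Bool), M.length = c.length ∧
        FreeGroup.mk M.reverse * x.2 = y.2 ∧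
        List.Chain' (fun a b : E × Bool => ¬(a.1 = b.1 ∧ a.2 = !b.2)) M ∧
        (∀ p ∈ M.head?, ∃ z, GStep v1 v2 p x z ∧ s(x, z) ∈ c.edges) := by
    intro x y c
    induction c with
    | nil => exact fun _ => ⟨[], by simp [FreeGroup.one_eq_mk, List.Chain']⟩
    | @cons x x' y h c ih =>
      intro ht
      obtain ⟨M', hlen, hmul, hch, hhead⟩ := ih ht.of_cons
      obtain ⟨p, hp⟩ := hadj h
      refine ⟨p :: M', by simpa using hlen, ?_, ?_, ?_⟩
      · rw [List.reverse_cons, ← FreeGroup.mul_mk, mul_assoc, gstep_mul hp, hmul]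
      · rw [List.Chain', List.isChain_cons]
        refine ⟨?_, hch⟩
        rintro q hq ⟨he, hb⟩
        obtain ⟨z, hz, hzmem⟩ := hhead q hq
        obtain ⟨e', b'⟩ := p
        obtain ⟨e2, b2⟩ := q
        simp only at he hb
        subst he
        have hz' : GStep v1 v2 (e', !b') x' z := by rwa [hb, Bool.not_not]
        have := gstep_cancel hp hz' 
        subst this
        have : s(x, x') ∈ c.edges := by rwa [Sym2.eq_swap]
        exact ((SimpleGraph.Walk.isTrail_cons h c).mp ht).2 this
      · rintro q hq
        simp at hq
        subst hq
        exact ⟨x', hp, by simp⟩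
  constructor
  · intro u w r s c ht hlen
    obtain ⟨M, hMlen, hmul, hch, _⟩ := main c ht
    refine ⟨FreeGroup.mk M.reverse, ?_, hmul⟩
    apply mk_ne_one
    · simp [← List.length_pos_iff_ne_nil, hMlen, hlen]
    · rw [List.Chain', List.isChain_reverse]
      refine hch.imp ?_
      rintro a b hab ⟨h1, h2⟩
      exact hab ⟨h1.symm, by simp [h2]⟩
  · intro v c hc
    obtain ⟨M, hMlen, hmul, hch, _⟩ := main c hc.isTrail
    have hne : M.reverse ≠ [] := by
      have h3 := hc.three_le_length
      simp only [← List.length_pos_iff_ne_nil, List.length_reverse, hMlen]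
      omega
    refine mk_ne_one hne ?_ (mul_right_cancel (b := v.2) (by rw [hmul, one_mul]))
    rw [List.Chain', List.isChain_reverse]
    refine hch.imp ?_
    rintro a b hab ⟨h1, h2⟩
    exact hab ⟨h1.symm, by simp [h2]⟩
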